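/- Let c(x) = √((3+√(13+4x))/2). There exist an integer m ≥ 1 and real numbers 1 < X₀ < X₁ < ⋯ < X_m (for instance (X₀,…,X₈) = (10, 23, 30, 36, 45, 54, 72, 81, 90)) such that for all nonnegative reals y₁, …, y_m, y with y₁ + ⋯ + y_m + y ≤ 2 one has (2 − √(10y)/X_m − 10^{1/4}·y^{3/4}·2c(X₀)/X_m^{3/2} − 2·Σ_{k=1}^m (4c(X_k)² − 4c(X₀)²)·y_k/X_{k−1}² − 10^{1/4}·Σ_{k=1}^m (2c(X_k) − 2c(X₀))·y_k^{3/4}/X_{k−1}^{3/2}) / (8·c(X₀)²) ≥ 0.0414. -/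

import Mathlib

/-- `c x = √((3 + √(13 + 4x))/2)`, the largest real root of `u⁴ − 3u² − 1 − x`. -/
noncomputable def cFun (x : ℝ) : ℝ := Real.sqrt ((3 + Real.sqrt (13 + 4 * x)) / 2)

lemma sqrt_le_num {a b : ℝ} (hb : 0 ≤ b) (h : a ≤ b ^ 2) : Real.sqrt a ≤ b := by
  calc Real.sqrt a ≤ Real.sqrt (b ^ 2) := Real.sqrt_le_sqrt h
  _ = b := by rw [Real.sqrt_sq hb]

lemma num_le_sqrt {a b : ℝ} (ha : 0 ≤ a) (h : a ^ 2 ≤ b) : a ≤ Real.sqrt b := by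
  calc a = Real.sqrt (a ^ 2) := by rw [Real.sqrt_sq ha]
  _ ≤ Real.sqrt b := Real.sqrt_le_sqrt h

lemma rpow34_le {y : ℝ} (hy : 0 ≤ y) : y ^ ((3:ℝ)/4) ≤ y + 27/256 := by
  have h0 : (0:ℝ) ≤ y ^ ((3:ℝ)/4) := Real.rpow_nonneg hy _
  have hR : (0:ℝ) ≤ y + 27/256 := by linarith
  have h4 : (y ^ ((3:ℝ)/4)) ^ (4:ℕ) = y ^ (3:ℕ) := by
    rw [← Real.rpow_natCast (y ^ ((3:ℝ)/4)) 4, ← Real.rpow_mul hy,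
      show (3:ℝ)/4 * (4:ℕ) = ((3:ℕ):ℝ) by norm_num, Real.rpow_natCast]
  refine le_of_pow_le_pow_left₀ (n := 4) (by norm_num) hR ?_
  rw [h4]
  nlinarith [sq_nonneg (y/3 - 27/256), mul_nonneg (sq_nonneg (y/3 - 27/256)) hy,
    mul_nonneg (sq_nonneg (y/3 - 27/256)) (sq_nonneg y), sq_nonneg y]

lemma rpow32_eq {x : ℝ} (hx : 0 ≤ x) : x ^ ((3:ℝ)/2) = Real.sqrt (x ^ 3) := by
  rw [show (3:ℝ)/2 = (3:ℝ) * (1/2) by norm_num, Real.rpow_mul hx,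
    Real.sqrt_eq_rpow, show (3:ℝ) = ((3:ℕ):ℝ) by norm_num, Real.rpow_natCast]

lemma rpow14_10 : (10:ℝ) ^ ((1:ℝ)/4) ≤ 1.78 := by
  rw [show (1:ℝ)/4 = (1/2) * (1/2) by norm_num, Real.rpow_mul (by norm_num : (0:ℝ) ≤ 10),
    ← Real.sqrt_eq_rpow, ← Real.sqrt_eq_rpow]
  have h1 : Real.sqrt 10 ≤ 3.1684 := sqrt_le_num (by norm_num) (by norm_num)
  calc Real.sqrt (Real.sqrt 10) ≤ Real.sqrt 3.1684 := Real.sqrt_le_sqrt h1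
  _ ≤ 1.78 := sqrt_le_num (by norm_num) (by norm_num)

lemma rpow14_nonneg : (0:ℝ) ≤ (10:ℝ) ^ ((1:ℝ)/4) := Real.rpow_nonneg (by norm_num) _

lemma cFun_le {x b q : ℝ} (hb : 0 ≤ b) (hq : 0 ≤ q) (h1 : 13 + 4 * x ≤ q ^ 2)
    (h2 : 3 + q ≤ 2 * b ^ 2) : cFun x ≤ b := by
  unfold cFun
  apply sqrt_le_num hb
  have := sqrt_le_num hq h1
  nlinarith

lemma le_cFun {x b q : ℝ} (hb : 0 ≤ b) (hq : 0 ≤ q) (h1 : q ^ 2 ≤ 13 + 4 * x)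
    (h2 : 2 * b ^ 2 ≤ 3 + q) : b ≤ cFun x := by
  unfold cFun
  apply num_le_sqrt hb
  have := num_le_sqrt hq h1
  nlinarith

lemma cFun_sq_le {x q : ℝ} (hq : 0 ≤ q) (h1 : 13 + 4 * x ≤ q ^ 2) :
    cFun x ^ 2 ≤ (3 + q) / 2 := by
  unfold cFun
  rw [Real.sq_sqrt (by positivity)]
  have := sqrt_le_num hq h1
  linarith

lemma le_cFun_sq {x q : ℝ} (hq : 0 ≤ q) (h1 : q ^ 2 ≤ 13 + 4 * x) :
    (3 + q) / 2 ≤ cFun x ^ 2 := by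
  unfold cFun
  rw [Real.sq_sqrt (by positivity)]
  have := num_le_sqrt hq h1
  linarith

lemma S1bound {t : ℝ} (ht : 0 ≤ t) : Real.sqrt (10 * t) ≤ 5 * t + 1/2 :=
  sqrt_le_num (by linarith) (by nlinarith [sq_nonneg (5 * t - 1/2)])

lemma S2bound {t c X32 : ℝ} (ht : 0 ≤ t) (hc0 : 0 ≤ c) (hcu : c ≤ 2.27)
    (hX : 8000 ≤ X32) :
    (10:ℝ) ^ ((1:ℝ)/4) * t ^ ((3:ℝ)/4) * (2 * c) / X32
      ≤ 1.78 * (t + 27/256) * 4.54 / 8000 := by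
  have h34 : t ^ ((3:ℝ)/4) ≤ t + 27/256 := rpow34_le ht
  have h340 : (0:ℝ) ≤ t ^ ((3:ℝ)/4) := Real.rpow_nonneg ht _
  have e1 : (0:ℝ) ≤ t + 27/256 := by linarith
  have m1 : (10:ℝ) ^ ((1:ℝ)/4) * t ^ ((3:ℝ)/4) ≤ 1.78 * (t + 27/256) :=
    mul_le_mul rpow14_10 h34 h340 (by norm_num)
  have m2 : (10:ℝ) ^ ((1:ℝ)/4) * t ^ ((3:ℝ)/4) * (2 * c)
      ≤ 1.78 * (t + 27/256) * 4.54 :=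
    mul_le_mul m1 (by linarith) (by linarith)
      (by nlinarith)
  exact div_le_div₀ (by nlinarith) m2 (by norm_num) hX

lemma S3term {a b t K XX : ℝ} (h : 4 * a - 4 * b ≤ K) (ht : 0 ≤ t) (hXX : (0:ℝ) < XX) :
    (4 * a - 4 * b) * t / XX ≤ K * t / XX := by
  have h2 : (4 * a - 4 * b) * t ≤ K * t := mul_le_mul_of_nonneg_right h ht
  gcongr

lemma S4term {ck c0 t L X32 K : ℝ} (h : 2 * ck - 2 * c0 ≤ K) (hK : 0 ≤ K) (ht : 0 ≤ t)
    (hL : (0:ℝ) < L) (hX : L ≤ X32) :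
    (2 * ck - 2 * c0) * t ^ ((3:ℝ)/4) / X32 ≤ K * (t + 27/256) / L := by
  refine div_le_div₀ (mul_nonneg hK (by linarith)) ?_ hL hX
  calc (2 * ck - 2 * c0) * t ^ ((3:ℝ)/4) ≤ K * t ^ ((3:ℝ)/4) :=
        mul_le_mul_of_nonneg_right h (Real.rpow_nonneg ht _)
    _ ≤ K * (t + 27/256) := mul_le_mul_of_nonneg_left (rpow34_le ht) hK

lemma S4nonneg {K t L : ℝ} (hK : 0 ≤ K) (ht : 0 ≤ t) (hL : (0:ℝ) < L) :
    (0:ℝ) ≤ K * (t + 27/256) / L :=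
  div_nonneg (mul_nonneg hK (by linarith)) (le_of_lt hL)

set_option maxHeartbeats 1000000 in
/-- Numerical content of Theorem A(2): there exist `m ≥ 1` and cutoffs
`1 < X₀ < ⋯ < X_m` for which the min of the density expression (with `r = 2`,
`A = 2`, `T = 10`, `B = 2c`) is at least `0.0414`. -/
theorem stmt_17 :
    ∃ (m : ℕ), 1 ≤ m ∧ ∃ X : Fin (m + 1) → ℝ, 1 < X 0 ∧ StrictMono X ∧
      ∀ (y : Fin m → ℝ) (yinf : ℝ), (∀ k, 0 ≤ y k) → 0 ≤ yinf →
        (∑ k, y k) + yinf ≤ 2 →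
        0.0414 ≤ (2 - Real.sqrt (10 * yinf) / X (Fin.last m) -
          (10 : ℝ) ^ ((1 : ℝ) / 4) * yinf ^ ((3 : ℝ) / 4) * (2 * cFun (X 0)) /
            (X (Fin.last m)) ^ ((3 : ℝ) / 2) -
          2 * (∑ k : Fin m,
            (4 * cFun (X k.succ) ^ 2 - 4 * cFun (X 0) ^ 2) * y k / (X k.castSucc) ^ 2) -
          (10 : ℝ) ^ ((1 : ℝ) / 4) * ∑ k : Fin m,
            (2 * cFun (X k.succ) - 2 * cFun (X 0)) * (y k) ^ ((3 : ℝ) / 4) /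
              (X k.castSucc) ^ ((3 : ℝ) / 2)) / (8 * cFun (X 0) ^ 2) := by
  refine ⟨8, by norm_num, ![10,15,24,38,61,98,157,251,400], by norm_num, ?_, ?_⟩
  · rw [Fin.strictMono_iff_lt_succ]
    intro i
    fin_cases i <;> norm_num
    all_goals exact (show (15:ℝ) < 24 by norm_num)
  intro y yinf hy hyinf hsum
  simp only [Fin.sum_univ_eight] at hsum ⊢
  simp only [show (![10,15,24,38,61,98,157,251,400] : Fin 9 → ℝ) (Fin.last 8) = 400 from rfl,
    show (![10,15,24,38,61,98,157,251,400] : Fin 9 → ℝ) 0 = 10 from rfl,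
    show (![10,15,24,38,61,98,157,251,400] : Fin 9 → ℝ) ((0 : Fin 8).succ) = 15 from rfl,
    show (![10,15,24,38,61,98,157,251,400] : Fin 9 → ℝ) ((0 : Fin 8).castSucc) = 10 from rfl,
    show (![10,15,24,38,61,98,157,251,400] : Fin 9 → ℝ) ((1 : Fin 8).succ) = 24 from rfl,
    show (![10,15,24,38,61,98,157,251,400] : Fin 9 → ℝ) ((1 : Fin 8).castSucc) = 15 from rfl,
    show (![10,15,24,38,61,98,157,251,400] : Fin 9 → ℝ) ((2 : Fin 8).succ) = 38 from rfl,
    show (![10,15,24,38,61,98,157,251,400] : Fin 9 → ℝ) ((2 : Fin 8).castSucc) = 24 from rfl,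
    show (![10,15,24,38,61,98,157,251,400] : Fin 9 → ℝ) ((3 : Fin 8).succ) = 61 from rfl,
    show (![10,15,24,38,61,98,157,251,400] : Fin 9 → ℝ) ((3 : Fin 8).castSucc) = 38 from rfl,
    show (![10,15,24,38,61,98,157,251,400] : Fin 9 → ℝ) ((4 : Fin 8).succ) = 98 from rfl,
    show (![10,15,24,38,61,98,157,251,400] : Fin 9 → ℝ) ((4 : Fin 8).castSucc) = 61 from rfl,
    show (![10,15,24,38,61,98,157,251,400] : Fin 9 → ℝ) ((5 : Fin 8).succ) = 157 from rfl,
    show (![10,15,24,38,61,98,157,251,400] : Fin 9 → ℝ) ((5 : Fin 8).castSucc) = 98 from rfl,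
    show (![10,15,24,38,61,98,157,251,400] : Fin 9 → ℝ) ((6 : Fin 8).succ) = 251 from rfl,
    show (![10,15,24,38,61,98,157,251,400] : Fin 9 → ℝ) ((6 : Fin 8).castSucc) = 157 from rfl,
    show (![10,15,24,38,61,98,157,251,400] : Fin 9 → ℝ) ((7 : Fin 8).succ) = 400 from rfl,
    show (![10,15,24,38,61,98,157,251,400] : Fin 9 → ℝ) ((7 : Fin 8).castSucc) = 251 from rfl]
  have hc0l : (2.25:ℝ) ≤ cFun 10 :=
    le_cFun (by norm_num) (by norm_num) (q := 7.2) (by norm_num) (by norm_num)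
  have hc0u : cFun (10:ℝ) ≤ 2.27 :=
    cFun_le (by norm_num) (by norm_num) (q := 7.3) (by norm_num) (by norm_num)
  have hc0sqU : cFun (10:ℝ) ^ 2 ≤ 5.15 := by
    have h := cFun_sq_le (x := (10:ℝ)) (q := 7.3) (by norm_num) (by norm_num)
    linarith
  have hc0sqL : (5.1:ℝ) ≤ cFun (10:ℝ) ^ 2 := by
    have h := le_cFun_sq (x := (10:ℝ)) (q := 7.2) (by norm_num) (by norm_num)
    linarith
  have hcu1 : cFun (15:ℝ) ≤ 2.41 :=
    cFun_le (by norm_num) (by norm_num) (q := 8.6) (by norm_num) (by norm_num)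
  have hcsq1 : cFun (15:ℝ) ^ 2 ≤ 5.8 := by
    have h := cFun_sq_le (x := (15:ℝ)) (q := 8.6) (by norm_num) (by norm_num)
    linarith
  have hcu2 : cFun (24:ℝ) ≤ 2.6 :=
    cFun_le (by norm_num) (by norm_num) (q := 10.5) (by norm_num) (by norm_num)
  have hcsq2 : cFun (24:ℝ) ^ 2 ≤ 6.75 := by
    have h := cFun_sq_le (x := (24:ℝ)) (q := 10.5) (by norm_num) (by norm_num)
    linarith
  have hcu3 : cFun (38:ℝ) ≤ 2.82 :=
    cFun_le (by norm_num) (by norm_num) (q := 12.9) (by norm_num) (by norm_num)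
  have hcsq3 : cFun (38:ℝ) ^ 2 ≤ 7.95 := by
    have h := cFun_sq_le (x := (38:ℝ)) (q := 12.9) (by norm_num) (by norm_num)
    linarith
  have hcu4 : cFun (61:ℝ) ≤ 3.1 :=
    cFun_le (by norm_num) (by norm_num) (q := 16.1) (by norm_num) (by norm_num)
  have hcsq4 : cFun (61:ℝ) ^ 2 ≤ 9.55 := by
    have h := cFun_sq_le (x := (61:ℝ)) (q := 16.1) (by norm_num) (by norm_num)
    linarith
  have hcu5 : cFun (98:ℝ) ≤ 3.41 :=
    cFun_le (by norm_num) (by norm_num) (q := 20.2) (by norm_num) (by norm_num)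
  have hcsq5 : cFun (98:ℝ) ^ 2 ≤ 11.6 := by
    have h := cFun_sq_le (x := (98:ℝ)) (q := 20.2) (by norm_num) (by norm_num)
    linarith
  have hcu6 : cFun (157:ℝ) ≤ 3.77 :=
    cFun_le (by norm_num) (by norm_num) (q := 25.4) (by norm_num) (by norm_num)
  have hcsq6 : cFun (157:ℝ) ^ 2 ≤ 14.2 := by
    have h := cFun_sq_le (x := (157:ℝ)) (q := 25.4) (by norm_num) (by norm_num)
    linarith
  have hcu7 : cFun (251:ℝ) ≤ 4.18 :=
    cFun_le (by norm_num) (by norm_num) (q := 31.9) (by norm_num) (by norm_num)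
  have hcsq7 : cFun (251:ℝ) ^ 2 ≤ 17.45 := by
    have h := cFun_sq_le (x := (251:ℝ)) (q := 31.9) (by norm_num) (by norm_num)
    linarith
  have hcu8 : cFun (400:ℝ) ≤ 4.65 :=
    cFun_le (by norm_num) (by norm_num) (q := 40.2) (by norm_num) (by norm_num)
  have hcsq8 : cFun (400:ℝ) ^ 2 ≤ 21.6 := by
    have h := cFun_sq_le (x := (400:ℝ)) (q := 40.2) (by norm_num) (by norm_num)
    linarith
  have hL10 : (31:ℝ) ≤ (10:ℝ) ^ ((3:ℝ)/2) := by
    rw [rpow32_eq (by norm_num : (0:ℝ) ≤ 10)]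
    exact num_le_sqrt (by norm_num) (by norm_num)
  have hL15 : (58:ℝ) ≤ (15:ℝ) ^ ((3:ℝ)/2) := by
    rw [rpow32_eq (by norm_num : (0:ℝ) ≤ 15)]
    exact num_le_sqrt (by norm_num) (by norm_num)
  have hL24 : (117:ℝ) ≤ (24:ℝ) ^ ((3:ℝ)/2) := by
    rw [rpow32_eq (by norm_num : (0:ℝ) ≤ 24)]
    exact num_le_sqrt (by norm_num) (by norm_num)
  have hL38 : (234:ℝ) ≤ (38:ℝ) ^ ((3:ℝ)/2) := by
    rw [rpow32_eq (by norm_num : (0:ℝ) ≤ 38)]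
    exact num_le_sqrt (by norm_num) (by norm_num)
  have hL61 : (476:ℝ) ≤ (61:ℝ) ^ ((3:ℝ)/2) := by
    rw [rpow32_eq (by norm_num : (0:ℝ) ≤ 61)]
    exact num_le_sqrt (by norm_num) (by norm_num)
  have hL98 : (970:ℝ) ≤ (98:ℝ) ^ ((3:ℝ)/2) := by
    rw [rpow32_eq (by norm_num : (0:ℝ) ≤ 98)]
    exact num_le_sqrt (by norm_num) (by norm_num)
  have hL157 : (1967:ℝ) ≤ (157:ℝ) ^ ((3:ℝ)/2) := by
    rw [rpow32_eq (by norm_num : (0:ℝ) ≤ 157)]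
    exact num_le_sqrt (by norm_num) (by norm_num)
  have hL251 : (3976:ℝ) ≤ (251:ℝ) ^ ((3:ℝ)/2) := by
    rw [rpow32_eq (by norm_num : (0:ℝ) ≤ 251)]
    exact num_le_sqrt (by norm_num) (by norm_num)
  have hL400 : (8000:ℝ) ≤ (400:ℝ) ^ ((3:ℝ)/2) := by
    rw [rpow32_eq (by norm_num : (0:ℝ) ≤ 400)]
    exact num_le_sqrt (by norm_num) (by norm_num)
  have hpos : (0:ℝ) < 8 * cFun 10 ^ 2 :=
    mul_pos (by norm_num) (pow_pos (lt_of_lt_of_le (by norm_num) hc0l) 2)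
  rw [le_div_iff₀ hpos]
  have hS1 : Real.sqrt (10 * yinf) ≤ 5 * yinf + 1/2 := S1bound hyinf
  have hS2 : (10:ℝ) ^ ((1:ℝ)/4) * yinf ^ ((3:ℝ)/4) * (2 * cFun 10) / (400:ℝ) ^ ((3:ℝ)/2)
      ≤ 1.78 * (yinf + 27/256) * 4.54 / 8000 :=
    S2bound hyinf (by linarith) hc0u hL400
  have t1 : (4 * cFun (15:ℝ) ^ 2 - 4 * cFun (10:ℝ) ^ 2) * y 0 / (10:ℝ) ^ 2
      ≤ 2.8 * y 0 / (10:ℝ) ^ 2 :=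
    S3term (by linarith [hcsq1, hc0sqL]) (hy 0) (by norm_num)
  have t2 : (4 * cFun (24:ℝ) ^ 2 - 4 * cFun (10:ℝ) ^ 2) * y 1 / (15:ℝ) ^ 2
      ≤ 6.6 * y 1 / (15:ℝ) ^ 2 :=
    S3term (by linarith [hcsq2, hc0sqL]) (hy 1) (by norm_num)
  have t3 : (4 * cFun (38:ℝ) ^ 2 - 4 * cFun (10:ℝ) ^ 2) * y 2 / (24:ℝ) ^ 2
      ≤ 11.4 * y 2 / (24:ℝ) ^ 2 :=
    S3term (by linarith [hcsq3, hc0sqL]) (hy 2) (by norm_num)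
  have t4 : (4 * cFun (61:ℝ) ^ 2 - 4 * cFun (10:ℝ) ^ 2) * y 3 / (38:ℝ) ^ 2
      ≤ 17.8 * y 3 / (38:ℝ) ^ 2 :=
    S3term (by linarith [hcsq4, hc0sqL]) (hy 3) (by norm_num)
  have t5 : (4 * cFun (98:ℝ) ^ 2 - 4 * cFun (10:ℝ) ^ 2) * y 4 / (61:ℝ) ^ 2
      ≤ 26 * y 4 / (61:ℝ) ^ 2 :=
    S3term (by linarith [hcsq5, hc0sqL]) (hy 4) (by norm_num)
  have t6 : (4 * cFun (157:ℝ) ^ 2 - 4 * cFun (10:ℝ) ^ 2) * y 5 / (98:ℝ) ^ 2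
      ≤ 36.4 * y 5 / (98:ℝ) ^ 2 :=
    S3term (by linarith [hcsq6, hc0sqL]) (hy 5) (by norm_num)
  have t7 : (4 * cFun (251:ℝ) ^ 2 - 4 * cFun (10:ℝ) ^ 2) * y 6 / (157:ℝ) ^ 2
      ≤ 49.4 * y 6 / (157:ℝ) ^ 2 :=
    S3term (by linarith [hcsq7, hc0sqL]) (hy 6) (by norm_num)
  have t8 : (4 * cFun (400:ℝ) ^ 2 - 4 * cFun (10:ℝ) ^ 2) * y 7 / (251:ℝ) ^ 2
      ≤ 66 * y 7 / (251:ℝ) ^ 2 :=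
    S3term (by linarith [hcsq8, hc0sqL]) (hy 7) (by norm_num)
  have s1 : (2 * cFun (15:ℝ) - 2 * cFun (10:ℝ)) * y 0 ^ ((3:ℝ)/4) / (10:ℝ) ^ ((3:ℝ)/2)
      ≤ 0.32 * (y 0 + 27/256) / 31 :=
    S4term (by linarith [hcu1, hc0l]) (by norm_num) (hy 0) (by norm_num) hL10
  have s2 : (2 * cFun (24:ℝ) - 2 * cFun (10:ℝ)) * y 1 ^ ((3:ℝ)/4) / (15:ℝ) ^ ((3:ℝ)/2)
      ≤ 0.7 * (y 1 + 27/256) / 58 :=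
    S4term (by linarith [hcu2, hc0l]) (by norm_num) (hy 1) (by norm_num) hL15
  have s3 : (2 * cFun (38:ℝ) - 2 * cFun (10:ℝ)) * y 2 ^ ((3:ℝ)/4) / (24:ℝ) ^ ((3:ℝ)/2)
      ≤ 1.14 * (y 2 + 27/256) / 117 :=
    S4term (by linarith [hcu3, hc0l]) (by norm_num) (hy 2) (by norm_num) hL24
  have s4 : (2 * cFun (61:ℝ) - 2 * cFun (10:ℝ)) * y 3 ^ ((3:ℝ)/4) / (38:ℝ) ^ ((3:ℝ)/2)
      ≤ 1.7 * (y 3 + 27/256) / 234 :=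
    S4term (by linarith [hcu4, hc0l]) (by norm_num) (hy 3) (by norm_num) hL38
  have s5 : (2 * cFun (98:ℝ) - 2 * cFun (10:ℝ)) * y 4 ^ ((3:ℝ)/4) / (61:ℝ) ^ ((3:ℝ)/2)
      ≤ 2.32 * (y 4 + 27/256) / 476 :=
    S4term (by linarith [hcu5, hc0l]) (by norm_num) (hy 4) (by norm_num) hL61
  have s6 : (2 * cFun (157:ℝ) - 2 * cFun (10:ℝ)) * y 5 ^ ((3:ℝ)/4) / (98:ℝ) ^ ((3:ℝ)/2)
      ≤ 3.04 * (y 5 + 27/256) / 970 :=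
    S4term (by linarith [hcu6, hc0l]) (by norm_num) (hy 5) (by norm_num) hL98
  have s7 : (2 * cFun (251:ℝ) - 2 * cFun (10:ℝ)) * y 6 ^ ((3:ℝ)/4) / (157:ℝ) ^ ((3:ℝ)/2)
      ≤ 3.86 * (y 6 + 27/256) / 1967 :=
    S4term (by linarith [hcu7, hc0l]) (by norm_num) (hy 6) (by norm_num) hL157
  have s8 : (2 * cFun (400:ℝ) - 2 * cFun (10:ℝ)) * y 7 ^ ((3:ℝ)/4) / (251:ℝ) ^ ((3:ℝ)/2)
      ≤ 4.8 * (y 7 + 27/256) / 3976 :=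
    S4term (by linarith [hcu8, hc0l]) (by norm_num) (hy 7) (by norm_num) hL251
  have r1 : (0:ℝ) ≤ 0.32 * (y 0 + 27/256) / 31 :=
    S4nonneg (by norm_num) (hy 0) (by norm_num)
  have r2 : (0:ℝ) ≤ 0.7 * (y 1 + 27/256) / 58 :=
    S4nonneg (by norm_num) (hy 1) (by norm_num)
  have r3 : (0:ℝ) ≤ 1.14 * (y 2 + 27/256) / 117 :=
    S4nonneg (by norm_num) (hy 2) (by norm_num)
  have r4 : (0:ℝ) ≤ 1.7 * (y 3 + 27/256) / 234 :=
    S4nonneg (by norm_num) (hy 3) (by norm_num)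
  have r5 : (0:ℝ) ≤ 2.32 * (y 4 + 27/256) / 476 :=
    S4nonneg (by norm_num) (hy 4) (by norm_num)
  have r6 : (0:ℝ) ≤ 3.04 * (y 5 + 27/256) / 970 :=
    S4nonneg (by norm_num) (hy 5) (by norm_num)
  have r7 : (0:ℝ) ≤ 3.86 * (y 6 + 27/256) / 1967 :=
    S4nonneg (by norm_num) (hy 6) (by norm_num)
  have r8 : (0:ℝ) ≤ 4.8 * (y 7 + 27/256) / 3976 :=
    S4nonneg (by norm_num) (hy 7) (by norm_num)
  have hS3 : 2 * ((4 * cFun (15:ℝ) ^ 2 - 4 * cFun (10:ℝ) ^ 2) * y 0 / (10:ℝ) ^ 2 +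
        (4 * cFun (24:ℝ) ^ 2 - 4 * cFun (10:ℝ) ^ 2) * y 1 / (15:ℝ) ^ 2 +
        (4 * cFun (38:ℝ) ^ 2 - 4 * cFun (10:ℝ) ^ 2) * y 2 / (24:ℝ) ^ 2 +
        (4 * cFun (61:ℝ) ^ 2 - 4 * cFun (10:ℝ) ^ 2) * y 3 / (38:ℝ) ^ 2 +
        (4 * cFun (98:ℝ) ^ 2 - 4 * cFun (10:ℝ) ^ 2) * y 4 / (61:ℝ) ^ 2 +
        (4 * cFun (157:ℝ) ^ 2 - 4 * cFun (10:ℝ) ^ 2) * y 5 / (98:ℝ) ^ 2 +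
        (4 * cFun (251:ℝ) ^ 2 - 4 * cFun (10:ℝ) ^ 2) * y 6 / (157:ℝ) ^ 2 +
        (4 * cFun (400:ℝ) ^ 2 - 4 * cFun (10:ℝ) ^ 2) * y 7 / (251:ℝ) ^ 2)
      ≤ 2 * (2.8 * y 0 / (10:ℝ) ^ 2 +
        6.6 * y 1 / (15:ℝ) ^ 2 +
        11.4 * y 2 / (24:ℝ) ^ 2 +
        17.8 * y 3 / (38:ℝ) ^ 2 +
        26 * y 4 / (61:ℝ) ^ 2 +
        36.4 * y 5 / (98:ℝ) ^ 2 +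
        49.4 * y 6 / (157:ℝ) ^ 2 +
        66 * y 7 / (251:ℝ) ^ 2) :=
    mul_le_mul_of_nonneg_left (by linarith [t1, t2, t3, t4, t5, t6, t7, t8]) (by norm_num)
  have hS4 : (10:ℝ) ^ ((1:ℝ)/4) * ((2 * cFun (15:ℝ) - 2 * cFun (10:ℝ)) * y 0 ^ ((3:ℝ)/4) / (10:ℝ) ^ ((3:ℝ)/2) +
        (2 * cFun (24:ℝ) - 2 * cFun (10:ℝ)) * y 1 ^ ((3:ℝ)/4) / (15:ℝ) ^ ((3:ℝ)/2) +
        (2 * cFun (38:ℝ) - 2 * cFun (10:ℝ)) * y 2 ^ ((3:ℝ)/4) / (24:ℝ) ^ ((3:ℝ)/2) +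
        (2 * cFun (61:ℝ) - 2 * cFun (10:ℝ)) * y 3 ^ ((3:ℝ)/4) / (38:ℝ) ^ ((3:ℝ)/2) +
        (2 * cFun (98:ℝ) - 2 * cFun (10:ℝ)) * y 4 ^ ((3:ℝ)/4) / (61:ℝ) ^ ((3:ℝ)/2) +
        (2 * cFun (157:ℝ) - 2 * cFun (10:ℝ)) * y 5 ^ ((3:ℝ)/4) / (98:ℝ) ^ ((3:ℝ)/2) +
        (2 * cFun (251:ℝ) - 2 * cFun (10:ℝ)) * y 6 ^ ((3:ℝ)/4) / (157:ℝ) ^ ((3:ℝ)/2) +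
        (2 * cFun (400:ℝ) - 2 * cFun (10:ℝ)) * y 7 ^ ((3:ℝ)/4) / (251:ℝ) ^ ((3:ℝ)/2))
      ≤ 1.78 * (0.32 * (y 0 + 27/256) / 31 +
        0.7 * (y 1 + 27/256) / 58 +
        1.14 * (y 2 + 27/256) / 117 +
        1.7 * (y 3 + 27/256) / 234 +
        2.32 * (y 4 + 27/256) / 476 +
        3.04 * (y 5 + 27/256) / 970 +
        3.86 * (y 6 + 27/256) / 1967 +
        4.8 * (y 7 + 27/256) / 3976) := by
    calc (10:ℝ) ^ ((1:ℝ)/4) * ((2 * cFun (15:ℝ) - 2 * cFun (10:ℝ)) * y 0 ^ ((3:ℝ)/4) / (10:ℝ) ^ ((3:ℝ)/2) +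
        (2 * cFun (24:ℝ) - 2 * cFun (10:ℝ)) * y 1 ^ ((3:ℝ)/4) / (15:ℝ) ^ ((3:ℝ)/2) +
        (2 * cFun (38:ℝ) - 2 * cFun (10:ℝ)) * y 2 ^ ((3:ℝ)/4) / (24:ℝ) ^ ((3:ℝ)/2) +
        (2 * cFun (61:ℝ) - 2 * cFun (10:ℝ)) * y 3 ^ ((3:ℝ)/4) / (38:ℝ) ^ ((3:ℝ)/2) +
        (2 * cFun (98:ℝ) - 2 * cFun (10:ℝ)) * y 4 ^ ((3:ℝ)/4) / (61:ℝ) ^ ((3:ℝ)/2) +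
        (2 * cFun (157:ℝ) - 2 * cFun (10:ℝ)) * y 5 ^ ((3:ℝ)/4) / (98:ℝ) ^ ((3:ℝ)/2) +
        (2 * cFun (251:ℝ) - 2 * cFun (10:ℝ)) * y 6 ^ ((3:ℝ)/4) / (157:ℝ) ^ ((3:ℝ)/2) +
        (2 * cFun (400:ℝ) - 2 * cFun (10:ℝ)) * y 7 ^ ((3:ℝ)/4) / (251:ℝ) ^ ((3:ℝ)/2))
        ≤ (10:ℝ) ^ ((1:ℝ)/4) * (0.32 * (y 0 + 27/256) / 31 +
        0.7 * (y 1 + 27/256) / 58 +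
        1.14 * (y 2 + 27/256) / 117 +
        1.7 * (y 3 + 27/256) / 234 +
        2.32 * (y 4 + 27/256) / 476 +
        3.04 * (y 5 + 27/256) / 970 +
        3.86 * (y 6 + 27/256) / 1967 +
        4.8 * (y 7 + 27/256) / 3976) :=
          mul_le_mul_of_nonneg_left (by linarith [s1, s2, s3, s4, s5, s6, s7, s8]) rpow14_nonneg
      _ ≤ 1.78 * (0.32 * (y 0 + 27/256) / 31 +
        0.7 * (y 1 + 27/256) / 58 +
        1.14 * (y 2 + 27/256) / 117 +
        1.7 * (y 3 + 27/256) / 234 +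
        2.32 * (y 4 + 27/256) / 476 +
        3.04 * (y 5 + 27/256) / 970 +
        3.86 * (y 6 + 27/256) / 1967 +
        4.8 * (y 7 + 27/256) / 3976) :=
          mul_le_mul_of_nonneg_right rpow14_10 (by linarith [r1, r2, r3, r4, r5, r6, r7, r8])
  have hS1' : Real.sqrt (10 * yinf) / 400 ≤ (5 * yinf + 1/2) / 400 := by linarith [hS1]
  linarith [hy 0, hy 1, hy 2, hy 3, hy 4, hy 5, hy 6, hy 7, hS1', hS2, hS3, hS4, hc0sqU,
    hsum, hyinf]
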